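/- With the same setup (density matrix ρ, POVM M, estimator β̌, influence operators X_s), defining the complex covariance Z(X)_{st} = tr(ρ X_s X_t), the error matrix satisfies Σ ⪰ Z(X) in the sense that Σ − Z(X) is Hermitian positive semidefinite (Σ viewed as a complex matrix). -/

import Mathlib

open Matrix ComplexOrder

private lemma trace_nonneg_of_posSemidef' {n : Type*} [Fintype n] [DecidableEq n]
    {A : Matrix n n ℂ} (hA : A.PosSemidef) : 0 ≤ A.trace := by
  rw [Matrix.trace]
  refine Finset.sum_nonneg fun i _ => ?_
  have := hA.dotProduct_mulVec_nonneg (Pi.single i 1)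
  simpa [dotProduct, Matrix.mulVec, Pi.single_apply] using this

private lemma trace_mul_nonneg' {n : Type*} [Fintype n] [DecidableEq n]
    {A B : Matrix n n ℂ} (hA : A.PosSemidef) (hB : B.PosSemidef) :
    0 ≤ (A * B).trace := by
  obtain ⟨C, rfl⟩ : ∃ C : Matrix n n ℂ, A = Cᴴ * C := by
    open scoped MatrixOrder in
    obtain ⟨C, hC⟩ := CStarAlgebra.nonneg_iff_eq_star_mul_self.mp hA.nonneg
    exact ⟨C, hC⟩
  have h1 : (C * B * Cᴴ).trace = (Cᴴ * C * B).trace := Matrix.trace_mul_cycle C B Cᴴ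
  rw [← h1]
  have := hB.conjTranspose_mul_mul_same Cᴴ
  rw [Matrix.conjTranspose_conjTranspose] at this
  exact trace_nonneg_of_posSemidef' this

/-- Holevo's matrix CRB with the complex covariance: `Sig ⪰ Z(X)` as Hermitian
matrices, where `Z(X)_{st} = tr(ρ X_s X_t)`. -/
theorem error_matrix_ge_complex_covariance {Ω n q : Type*}
    [Fintype Ω] [Fintype n] [DecidableEq n] [Fintype q] [DecidableEq q]
    (ρ : Matrix n n ℂ) (hρ : ρ.PosSemidef) (hρtr : ρ.trace = 1)
    (M : Ω → Matrix n n ℂ) (hpos : ∀ x, (M x).PosSemidef) (hsum : ∑ x, M x = 1)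
    (betaHat : Ω → q → ℝ) (beta : q → ℝ)
    (hmean : ∀ s, beta s = ∑ x, betaHat x s * (ρ * M x).trace.re)
    (X : q → Matrix n n ℂ)
    (hX : ∀ s, X s = ∑ x, ((betaHat x s - beta s : ℝ) : ℂ) • M x)
    (Sig : Matrix q q ℝ)
    (hSig : ∀ s t, Sig s t = ∑ x, (betaHat x s - beta s) * (betaHat x t - beta t)
        * (ρ * M x).trace.re)
    (Z : Matrix q q ℂ)
    (hZ : ∀ s t, Z s t = (ρ * (X s * X t)).trace) :
    (Sig.map (Complex.ofReal) - Z).PosSemidef := by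
  have hXh : ∀ s, (X s).IsHermitian := by
    intro s
    rw [hX s]
    show _ = _
    rw [Matrix.conjTranspose_sum]
    refine Finset.sum_congr rfl fun x _ => ?_
    rw [Matrix.conjTranspose_smul, (hpos x).1]
    simp [Complex.conj_ofReal]
  have hpx : ∀ x, (((ρ * M x).trace.re : ℝ) : ℂ) = (ρ * M x).trace := by
    intro x
    have h := trace_mul_nonneg' hρ (hpos x)
    rw [Complex.nonneg_iff] at h
    apply Complex.ext
    · simp
    · simp [← h.2]
  refine Matrix.posSemidef_iff_dotProduct_mulVec.mpr ⟨?_, ?_⟩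
  · -- Hermitian
    rw [Matrix.IsHermitian, Matrix.conjTranspose_sub]
    congr 1
    · ext s t
      simp only [Matrix.conjTranspose_apply, Matrix.map_apply, RCLike.star_def,
        Complex.conj_ofReal]
      norm_cast
      rw [hSig, hSig]
      exact Finset.sum_congr rfl fun x _ => by ring
    · ext s t
      simp only [Matrix.conjTranspose_apply, hZ]
      show star _ = _
      rw [← Matrix.trace_conjTranspose, Matrix.conjTranspose_mul,
        Matrix.conjTranspose_mul, hρ.1.eq, (hXh s).eq, (hXh t).eq,
        Matrix.trace_mul_comm]
  · intro v
    set a : Ω → ℂ := fun x => ∑ t, v t * ((betaHat x t - beta t : ℝ) : ℂ) with hadef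
    set B : Matrix n n ℂ := ∑ x, a x • M x with hBdef
    have hsumB : ∑ t, v t • X t = B := by
      calc ∑ t, v t • X t
          = ∑ t, ∑ x, (v t * ((betaHat x t - beta t : ℝ) : ℂ)) • M x := by
            simp_rw [hX, Finset.smul_sum, smul_smul]
        _ = ∑ x, (∑ t, v t * ((betaHat x t - beta t : ℝ) : ℂ)) • M x := by
            rw [Finset.sum_comm]; simp_rw [Finset.sum_smul]
        _ = B := rfl
    have hBH : Bᴴ = ∑ s, star (v s) • X s := by
      rw [← hsumB, Matrix.conjTranspose_sum]
      exact Finset.sum_congr rfl fun s _ => by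
        rw [Matrix.conjTranspose_smul, (hXh s).eq]
    have hBH' : Bᴴ = ∑ x, star (a x) • M x := by
      rw [hBdef, Matrix.conjTranspose_sum]
      refine Finset.sum_congr rfl fun x _ => by
        rw [Matrix.conjTranspose_smul, (hpos x).1.eq]
    have hstar_a : ∀ x, star (a x) = ∑ s, star (v s) * ((betaHat x s - beta s : ℝ) : ℂ) := by
      intro x
      rw [hadef]
      simp [Complex.conj_ofReal, mul_comm]
    -- (A) the Sig quadratic form
    have hSv : star v ⬝ᵥ (Sig.map Complex.ofReal).mulVec v
        = ∑ x, star (a x) * a x * (ρ * M x).trace := by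
      have e1 : star v ⬝ᵥ (Sig.map Complex.ofReal).mulVec v
          = ∑ s, ∑ t, ∑ x, (star (v s) * ((betaHat x s - beta s : ℝ) : ℂ))
              * (v t * ((betaHat x t - beta t : ℝ) : ℂ)) * (ρ * M x).trace := by
        simp only [dotProduct, Matrix.mulVec, Pi.star_apply,
          Matrix.map_apply, hSig, Complex.ofReal_sum, Finset.mul_sum,
          Finset.sum_mul, Complex.ofReal_mul]
        refine Finset.sum_congr rfl fun s _ => Finset.sum_congr rfl fun t _ =>
          Finset.sum_congr rfl fun x _ => ?_
        rw [hpx x]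
        ring
      have e2 : ∀ x : Ω, star (a x) * a x * (ρ * M x).trace
          = ∑ s, ∑ t, (star (v s) * ((betaHat x s - beta s : ℝ) : ℂ))
              * (v t * ((betaHat x t - beta t : ℝ) : ℂ)) * (ρ * M x).trace := by
        intro x
        rw [hstar_a x, hadef, Finset.sum_mul_sum, Finset.sum_mul]
        simp only [Finset.sum_mul]
      rw [e1]
      simp only [e2]
      calc ∑ s, ∑ t, ∑ x, (star (v s) * ((betaHat x s - beta s : ℝ) : ℂ))
              * (v t * ((betaHat x t - beta t : ℝ) : ℂ)) * (ρ * M x).trace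
          = ∑ s, ∑ x, ∑ t, (star (v s) * ((betaHat x s - beta s : ℝ) : ℂ))
              * (v t * ((betaHat x t - beta t : ℝ) : ℂ)) * (ρ * M x).trace :=
            Finset.sum_congr rfl fun s _ => Finset.sum_comm
        _ = ∑ x, ∑ s, ∑ t, (star (v s) * ((betaHat x s - beta s : ℝ) : ℂ))
              * (v t * ((betaHat x t - beta t : ℝ) : ℂ)) * (ρ * M x).trace :=
            Finset.sum_comm
    -- (B) the Z quadratic form
    have hZv : star v ⬝ᵥ Z.mulVec v = (ρ * (Bᴴ * B)).trace := by
      rw [hBH, ← hsumB]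
      rw [Finset.sum_mul]
      simp only [Finset.smul_sum, Matrix.mul_sum, smul_mul_assoc, mul_smul_comm,
        smul_smul, Matrix.trace_sum, Matrix.trace_smul, smul_eq_mul]
      simp only [dotProduct, Matrix.mulVec, Pi.star_apply, hZ,
        Finset.mul_sum]
      refine Finset.sum_congr rfl fun s _ => Finset.sum_congr rfl fun t _ => by ring
    -- (C) the key identity
    have expand : ∀ x : Ω, (ρ * ((a x • (1 : Matrix n n ℂ) - B)ᴴ
          * (M x * (a x • (1 : Matrix n n ℂ) - B)))).trace
        = star (a x) * a x * (ρ * M x).trace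
          - star (a x) * (ρ * (M x * B)).trace
          - a x * (ρ * (Bᴴ * M x)).trace
          + (ρ * (Bᴴ * (M x * B))).trace := by
      intro x
      rw [Matrix.conjTranspose_sub, Matrix.conjTranspose_smul,
        Matrix.conjTranspose_one]
      simp only [Matrix.mul_sub, Matrix.sub_mul, smul_mul_assoc, mul_smul_comm,
        smul_smul, Matrix.mul_one, Matrix.one_mul, Matrix.trace_sub,
        Matrix.trace_smul, smul_eq_mul, mul_assoc]
      ring
    have h2 : ∑ x, star (a x) * (ρ * (M x * B)).trace = (ρ * (Bᴴ * B)).trace := by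
      rw [hBH', Finset.sum_mul]
      simp only [Matrix.mul_sum, smul_mul_assoc, mul_smul_comm, Matrix.trace_sum,
        Matrix.trace_smul, smul_eq_mul, mul_assoc]
    have h3 : ∑ x, a x * (ρ * (Bᴴ * M x)).trace = (ρ * (Bᴴ * B)).trace := by
      conv_rhs => rw [hBdef]
      simp only [Matrix.mul_sum, Finset.smul_sum, mul_smul_comm, Matrix.trace_sum,
        Matrix.trace_smul, smul_eq_mul]
      rfl
    have h4 : ∑ x, (ρ * (Bᴴ * (M x * B))).trace = (ρ * (Bᴴ * B)).trace := by
      have : Bᴴ * B = Bᴴ * ((∑ x, M x) * B) := by rw [hsum, Matrix.one_mul]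
      rw [this, Finset.sum_mul, Matrix.mul_sum, Matrix.mul_sum, Matrix.trace_sum]
    have key : ∑ x, star (a x) * a x * (ρ * M x).trace - (ρ * (Bᴴ * B)).trace
        = ∑ x, (ρ * ((a x • (1 : Matrix n n ℂ) - B)ᴴ
            * (M x * (a x • (1 : Matrix n n ℂ) - B)))).trace := by
      simp only [expand]
      rw [Finset.sum_add_distrib, Finset.sum_sub_distrib, Finset.sum_sub_distrib,
        h2, h3, h4]
      ring
    have hnn : ∀ x : Ω, 0 ≤ (ρ * ((a x • (1 : Matrix n n ℂ) - B)ᴴ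
        * (M x * (a x • (1 : Matrix n n ℂ) - B)))).trace := by
      intro x
      have hps := (hpos x).conjTranspose_mul_mul_same (a x • (1 : Matrix n n ℂ) - B)
      rw [Matrix.mul_assoc] at hps
      exact trace_mul_nonneg' hρ hps
    have : star v ⬝ᵥ ((Sig.map Complex.ofReal - Z).mulVec v)
        = ∑ x, star (a x) * a x * (ρ * M x).trace - (ρ * (Bᴴ * B)).trace := by
      rw [Matrix.sub_mulVec, dotProduct_sub, hSv, hZv]
    rw [this, key]
    exact Finset.sum_nonneg fun x _ => hnn x
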